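/- For all x, y in the unit disk B² ⊂ ℂ with hyperbolic midpoint q and t = tanh(ρ_{B²}(x,y)/4), the triangular ratio metric satisfies s_{B²}(x,y) ≤ (1+|q|)t / (1+|q|t²). -/

import Mathlib

open Complex

/-- Triangular ratio metric of the unit disk. -/
noncomputable def sB (x y : ℂ) : ℝ :=
  ‖x - y‖ /
    sInf ((fun z => ‖x - z‖ + ‖z - y‖) '' {z : ℂ | ‖z‖ = 1})

/-- The hyperbolic metric of the unit disk, characterized by
`sinh²(ρ(x,y)/2) = |x−y|²/((1−|x|²)(1−|y|²))`. -/
noncomputable def rhoB (x y : ℂ) : ℝ :=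
  2 * Real.arsinh (‖x - y‖ /
    Real.sqrt ((1 - ‖x‖ ^ 2) * (1 - ‖y‖ ^ 2)))

lemma normSq_id (x y : ℂ) :
    Complex.normSq (1 - (starRingEnd ℂ) x * y) =
      (1 - ‖x‖ ^ 2) * (1 - ‖y‖ ^ 2) + Complex.normSq (x - y) := by
  rw [show ‖x‖ ^ 2 = Complex.normSq x from Complex.sq_norm x,
    show ‖y‖ ^ 2 = Complex.normSq y from Complex.sq_norm y]
  simp only [Complex.normSq_apply, Complex.sub_re, Complex.sub_im, Complex.mul_re, Complex.mul_im,
    Complex.one_re, Complex.one_im, Complex.conj_re, Complex.conj_im]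
  ring

lemma abs_id (x y : ℂ) :
    ‖1 - (starRingEnd ℂ) x * y‖ ^ 2 =
      (1 - ‖x‖ ^ 2) * (1 - ‖y‖ ^ 2) + ‖x - y‖ ^ 2 := by
  rw [Complex.sq_norm (1 - (starRingEnd ℂ) x * y), Complex.sq_norm (x - y), normSq_id]

lemma one_sub_small_ne (w : ℂ) (h : ‖w‖ < 1) : (1 : ℂ) - w ≠ 0 := by
  intro h0
  rw [sub_eq_zero] at h0
  rw [← h0] at h
  simp at h

lemma one_add_small_ne (w : ℂ) (h : ‖w‖ < 1) : (1 : ℂ) + w ≠ 0 := by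
  intro h0
  have : w = -1 := by linear_combination h0
  rw [this] at h
  simp at h

lemma conj_mul_small (x y : ℂ) (hx : ‖x‖ < 1) (hy : ‖y‖ < 1) :
    ‖(starRingEnd ℂ) x * y‖ < 1 := by
  rw [norm_mul, Complex.norm_conj]
  calc ‖x‖ * ‖y‖ ≤ 1 * ‖y‖ := by
        apply mul_le_mul_of_nonneg_right hx.le (norm_nonneg _)
    _ < 1 := by simpa using hy

lemma one_sub_conj_mul_ne (x y : ℂ) (hx : ‖x‖ < 1) (hy : ‖y‖ < 1) :
    (1 : ℂ) - (starRingEnd ℂ) x * y ≠ 0 :=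
  one_sub_small_ne _ (conj_mul_small x y hx hy)

lemma tanh_half_rhoB (x y : ℂ) (hx : ‖x‖ < 1) (hy : ‖y‖ < 1) :
    Real.tanh (rhoB x y / 2) * ‖1 - (starRingEnd ℂ) x * y‖ = ‖x - y‖ := by
  have hP : (0:ℝ) < (1 - ‖x‖ ^ 2) * (1 - ‖y‖ ^ 2) := by
    apply mul_pos <;> nlinarith [norm_nonneg x, norm_nonneg y]
  set P := (1 - ‖x‖ ^ 2) * (1 - ‖y‖ ^ 2) with hPdef
  set u := ‖x - y‖ / Real.sqrt P with hu
  have h2 : rhoB x y / 2 = Real.arsinh u := by rw [rhoB]; ring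
  have habs : ‖1 - (starRingEnd ℂ) x * y‖ = Real.sqrt (P + ‖x-y‖^2) := by
    rw [← abs_id x y]
    exact (Real.sqrt_sq (norm_nonneg _)).symm
  have hP' : Real.sqrt P ≠ 0 := ne_of_gt (Real.sqrt_pos.mpr hP)
  have hsq : Real.sqrt (1 + u ^ 2) = Real.sqrt (P + ‖x-y‖^2) / Real.sqrt P := by
    rw [← Real.sqrt_div (by positivity) P]
    congr 1
    rw [hu, div_pow, Real.sq_sqrt (le_of_lt hP)]
    field_simp
  rw [h2, Real.tanh_eq_sinh_div_cosh, Real.sinh_arsinh, Real.cosh_arsinh, habs, hsq, hu]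
  have h3 : Real.sqrt (P + ‖x-y‖^2) ≠ 0 := by
    apply ne_of_gt; apply Real.sqrt_pos.mpr; positivity
  field_simp

lemma tanh_double (u : ℝ) : Real.tanh (2*u) * (1 + Real.tanh u ^ 2) = 2 * Real.tanh u := by
  rw [Real.tanh_eq_sinh_div_cosh, Real.tanh_eq_sinh_div_cosh, Real.sinh_two_mul,
    Real.cosh_two_mul]
  have hc := Real.cosh_pos u
  have hc2 : Real.cosh u ^ 2 + Real.sinh u ^ 2 > 0 := by positivity
  field_simp

set_option maxHeartbeats 1000000 in
theorem stmt_18 (x y q : ℂ) (hx : ‖x‖ < 1) (hy : ‖y‖ < 1)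
    (hq : ‖q‖ < 1)
    (hmid1 : rhoB x q = rhoB x y / 2) (hmid2 : rhoB q y = rhoB x y / 2) :
    sB x y ≤ (1 + ‖q‖) * Real.tanh (rhoB x y / 4) /
      (1 + ‖q‖ * Real.tanh (rhoB x y / 4) ^ 2) := by
  set K := ‖q‖ with hKdef
  set t := Real.tanh (rhoB x y / 4) with htdef
  have hK0 : 0 ≤ K := norm_nonneg q
  have hK1 : K < 1 := hq
  have hrho0 : 0 ≤ rhoB x y := by
    rw [rhoB]
    have : 0 ≤ Real.arsinh (‖x - y‖ /
        Real.sqrt ((1 - ‖x‖ ^ 2) * (1 - ‖y‖ ^ 2))) :=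
      Real.arsinh_nonneg_iff.mpr (by positivity)
    linarith
  have ht0 : 0 ≤ t := by
    rw [htdef, Real.tanh_eq_sinh_div_cosh]
    apply div_nonneg (Real.sinh_nonneg_iff.mpr (by linarith)) (Real.cosh_pos _).le
  have ht1 : t < 1 := by
    rw [htdef, Real.tanh_eq_sinh_div_cosh]
    rw [div_lt_one (Real.cosh_pos _)]
    exact Real.sinh_lt_cosh _
  -- pseudo-hyperbolic relations
  have hpxq : ‖x - q‖ = t * ‖1 - (starRingEnd ℂ) x * q‖ := by
    have h := tanh_half_rhoB x q hx hq
    rw [hmid1, show rhoB x y / 2 / 2 = rhoB x y / 4 by ring] at h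
    exact h.symm
  have hpqy : ‖q - y‖ = t * ‖1 - (starRingEnd ℂ) q * y‖ := by
    have h := tanh_half_rhoB q y hq hy
    rw [hmid2, show rhoB x y / 2 / 2 = rhoB x y / 4 by ring] at h
    exact h.symm
  have hpxy : ‖x - y‖ * (1 + t^2) =
      2 * t * ‖1 - (starRingEnd ℂ) x * y‖ := by
    have h1 := tanh_half_rhoB x y hx hy
    have h2 := tanh_double (rhoB x y / 4)
    rw [show 2 * (rhoB x y / 4) = rhoB x y / 2 by ring] at h2
    rw [← h1]
    rw [← htdef] at h2
    nlinarith [h2, norm_nonneg (1 - (starRingEnd ℂ) x * y)]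
  clear_value K t
  rcases eq_or_lt_of_le ht0 with ht0' | htpos
  · -- t = 0 case
    have hxy0 : ‖x - y‖ = 0 := by
      have h := hpxy
      rw [← ht0'] at h
      simpa using h
    rw [sB, hxy0, ← ht0']
    simp
  · -- t > 0 case
    have ht2 : t ^ 2 < 1 := by nlinarith
    have hKsq : K ^ 2 < 1 := by nlinarith
    have hKt2pos : (0:ℝ) < 1 + K * t ^ 2 := by nlinarith
    have hq' : ‖q‖ < 1 := by rw [← hKdef]; exact hq
    have hdx : (1 : ℂ) - (starRingEnd ℂ) q * x ≠ 0 := one_sub_conj_mul_ne q x hq' hx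
    have hdy : (1 : ℂ) - (starRingEnd ℂ) q * y ≠ 0 := one_sub_conj_mul_ne q y hq' hy
    have hCx : ‖1 - (starRingEnd ℂ) q * x‖ ≠ 0 := by
      rw [ne_eq, norm_eq_zero]; exact hdx
    have hCy : ‖1 - (starRingEnd ℂ) q * y‖ ≠ 0 := by
      rw [ne_eq, norm_eq_zero]; exact hdy
    obtain ⟨a, hadef⟩ : ∃ u : ℂ, u = (x - q) / (1 - (starRingEnd ℂ) q * x) := ⟨_, rfl⟩
    obtain ⟨b, hbdef⟩ : ∃ u : ℂ, u = (y - q) / (1 - (starRingEnd ℂ) q * y) := ⟨_, rfl⟩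
    have habs_conj : ∀ u v : ℂ, ‖1 - (starRingEnd ℂ) u * v‖
        = ‖1 - (starRingEnd ℂ) v * u‖ := by
      intro u v
      rw [← Complex.norm_conj (1 - (starRingEnd ℂ) u * v)]
      congr 1
      simp only [map_sub, map_mul, map_one, Complex.conj_conj]
      ring
    have ha : ‖a‖ = t := by
      rw [hadef, norm_div, hpxq, habs_conj x q, mul_div_assoc, div_self hCx, mul_one]
    have hb : ‖b‖ = t := by
      rw [hbdef, norm_div, norm_sub_rev y q, hpqy, mul_div_assoc, div_self hCy, mul_one]
    have haq : a * (1 - (starRingEnd ℂ) q * x) = x - q := by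
      rw [hadef, div_mul_cancel₀ _ hdx]
    have hbq : b * (1 - (starRingEnd ℂ) q * y) = y - q := by
      rw [hbdef, div_mul_cancel₀ _ hdy]
    have hcaq : (starRingEnd ℂ) a * (1 - q * (starRingEnd ℂ) x)
        = (starRingEnd ℂ) x - (starRingEnd ℂ) q := by
      have h1 := congrArg (starRingEnd ℂ) haq
      simpa using h1
    -- Möbius identities
    have eA : (a - b) * ((1 - (starRingEnd ℂ) q * x) * (1 - (starRingEnd ℂ) q * y))
        = (x - y) * (1 - (starRingEnd ℂ) q * q) := by
      linear_combination (1 - (starRingEnd ℂ) q * y) * haq - (1 - (starRingEnd ℂ) q * x) * hbq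
    have eB : (1 - (starRingEnd ℂ) a * b) * ((1 - q * (starRingEnd ℂ) x) * (1 - (starRingEnd ℂ) q * y))
        = (1 - (starRingEnd ℂ) x * y) * (1 - q * (starRingEnd ℂ) q) := by
      linear_combination (-(b * (1 - (starRingEnd ℂ) q * y))) * hcaq
        - ((starRingEnd ℂ) x - (starRingEnd ℂ) q) * hbq
    have hqq : (starRingEnd ℂ) q * q = ((K ^ 2 : ℝ) : ℂ) := by
      rw [mul_comm, Complex.mul_conj, Complex.normSq_eq_norm_sq, ← hKdef]
    have hqq' : q * (starRingEnd ℂ) q = ((K ^ 2 : ℝ) : ℂ) := by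
      rw [mul_comm]; exact hqq
    have hK2 : (0:ℝ) < 1 - K ^ 2 := by linarith
    have habsqq : ‖1 - (starRingEnd ℂ) q * q‖ = 1 - K ^ 2 := by
      rw [hqq, show (1 : ℂ) - ((K ^ 2 : ℝ) : ℂ) = (((1 - K ^ 2 : ℝ)) : ℂ) by push_cast; ring,
        Complex.norm_real, Real.norm_eq_abs, abs_of_pos hK2]
    have habsqq' : ‖1 - q * (starRingEnd ℂ) q‖ = 1 - K ^ 2 := by
      rw [hqq']
      rw [show (1 : ℂ) - ((K ^ 2 : ℝ) : ℂ) = (((1 - K ^ 2 : ℝ)) : ℂ) by push_cast; ring,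
        Complex.norm_real, Real.norm_eq_abs, abs_of_pos hK2]
    -- |a - b| (1+t²) = 2 t |1 - conj a * b|
    have eAabs : ‖a - b‖ * (‖1 - (starRingEnd ℂ) q * x‖
        * ‖1 - (starRingEnd ℂ) q * y‖) = ‖x - y‖ * (1 - K ^ 2) := by
      have h := congrArg norm eA
      rw [norm_mul, norm_mul, norm_mul, habsqq] at h
      exact h
    have eBabs : ‖1 - (starRingEnd ℂ) a * b‖ * (‖1 - (starRingEnd ℂ) q * x‖
        * ‖1 - (starRingEnd ℂ) q * y‖)
        = ‖1 - (starRingEnd ℂ) x * y‖ * (1 - K ^ 2) := by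
      have h := congrArg norm eB
      rw [norm_mul, norm_mul, norm_mul, habsqq'] at h
      rw [show ‖1 - q * (starRingEnd ℂ) x‖
          = ‖1 - (starRingEnd ℂ) q * x‖ by
        rw [← Complex.norm_conj (1 - q * (starRingEnd ℂ) x)]
        congr 1
        simp only [map_sub, map_mul, map_one, Complex.conj_conj]] at h
      exact h
    have E : ‖a - b‖ * (1 + t ^ 2)
        = 2 * t * ‖1 - (starRingEnd ℂ) a * b‖ := by
      have hCxy : (0:ℝ) < ‖1 - (starRingEnd ℂ) q * x‖
          * ‖1 - (starRingEnd ℂ) q * y‖ :=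
        mul_pos (norm_pos_iff.mpr hdx) (norm_pos_iff.mpr hdy)
      apply mul_right_cancel₀ (ne_of_gt hCxy)
      linear_combination (1 + t ^ 2) * eAabs - 2 * t * eBabs + (1 - K ^ 2) * hpxy
    -- derive b = -a
    have hnsa : Complex.normSq a = t ^ 2 := by rw [Complex.normSq_eq_norm_sq, ha]
    have hnsb : Complex.normSq b = t ^ 2 := by rw [Complex.normSq_eq_norm_sq, hb]
    have hE2 : Complex.normSq (a - b) * (1 + t ^ 2) ^ 2
        = 4 * t ^ 2 * Complex.normSq (1 - (starRingEnd ℂ) a * b) := by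
      calc Complex.normSq (a - b) * (1 + t ^ 2) ^ 2
          = (‖a - b‖ * (1 + t ^ 2)) ^ 2 := by rw [← Complex.sq_norm]; ring
        _ = (2 * t * ‖1 - (starRingEnd ℂ) a * b‖) ^ 2 := by rw [E]
        _ = 4 * t ^ 2 * Complex.normSq (1 - (starRingEnd ℂ) a * b) := by
            rw [← Complex.sq_norm]; ring
    have hnm : Complex.normSq (1 - (starRingEnd ℂ) a * b)
        = 1 + t ^ 2 * t ^ 2 - 2 * (a * (starRingEnd ℂ) b).re := by
      rw [Complex.normSq_sub, map_one, map_mul Complex.normSq, Complex.normSq_conj, hnsa, hnsb,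
        one_mul, map_mul (starRingEnd ℂ), Complex.conj_conj]
    have hr : (a * (starRingEnd ℂ) b).re = -t ^ 2 := by
      have hns : Complex.normSq (a - b) = t ^ 2 + t ^ 2 - 2 * (a * (starRingEnd ℂ) b).re := by
        rw [Complex.normSq_sub, hnsa, hnsb]
      rw [hns, hnm] at hE2
      have h5 : (1 - t ^ 2) ^ 2 * ((a * (starRingEnd ℂ) b).re + t ^ 2) = 0 := by
        linear_combination (-(1:ℝ)/2) * hE2
      have h6 : (1 - t ^ 2) ^ 2 ≠ 0 := pow_ne_zero 2 (by intro h0; linarith)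
      have := (mul_eq_zero.mp h5).resolve_left h6
      linarith
    have hba : b = -a := by
      have h0 : Complex.normSq (a + b) = 0 := by
        rw [Complex.normSq_add, hnsa, hnsb, hr]; ring
      have h1 : a + b = 0 := Complex.normSq_eq_zero.mp h0
      linear_combination h1
    -- explicit relations for x and y
    have hxe : x * (1 + (starRingEnd ℂ) q * a) = a + q := by linear_combination -haq
    have hye : y * (1 - (starRingEnd ℂ) q * a) = q - a := by
      rw [hba] at hbq
      linear_combination -hbq
    obtain ⟨C1, hC1def⟩ : ∃ u : ℝ, u = ‖1 + (starRingEnd ℂ) q * a‖ := ⟨_, rfl⟩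
    obtain ⟨C2, hC2def⟩ : ∃ u : ℝ, u = ‖1 - (starRingEnd ℂ) q * a‖ := ⟨_, rfl⟩
    have hKt : K * t < 1 :=
      calc K * t ≤ K * 1 := mul_le_mul_of_nonneg_left ht1.le hK0
        _ = K := mul_one K
        _ < 1 := hK1
    have habs_qa : ‖(starRingEnd ℂ) q * a‖ = K * t := by
      rw [norm_mul, Complex.norm_conj, ha, ← hKdef]
    have hC1pos : 0 < C1 := by
      rw [hC1def]
      exact norm_pos_iff.mpr (one_add_small_ne _ (by rw [habs_qa]; exact hKt))
    have hC2pos : 0 < C2 := by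
      rw [hC2def]
      exact norm_pos_iff.mpr (one_sub_small_ne _ (by rw [habs_qa]; exact hKt))
    have hxyC : ‖x - y‖ * (C1 * C2) = 2 * t * (1 - K ^ 2) := by
      have hc : (x - y) * ((1 + (starRingEnd ℂ) q * a) * (1 - (starRingEnd ℂ) q * a))
          = 2 * a * (1 - (starRingEnd ℂ) q * q) := by
        linear_combination (1 - (starRingEnd ℂ) q * a) * hxe - (1 + (starRingEnd ℂ) q * a) * hye
      have h := congrArg norm hc
      rw [norm_mul, norm_mul, norm_mul, norm_mul, habsqq, Complex.norm_two, ha] at h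
      rw [hC1def, hC2def]
      linarith [h]
    have hxypos : 0 < ‖x - y‖ := by
      have h0 : 0 * (C1 * C2) < ‖x - y‖ * (C1 * C2) := by
        rw [zero_mul, hxyC]
        exact mul_pos (mul_pos two_pos htpos) hK2
      exact lt_of_mul_lt_mul_right h0 (le_of_lt (mul_pos hC1pos hC2pos))
    have ha' : a * (starRingEnd ℂ) a = ((t : ℂ)) ^ 2 := by
      rw [Complex.mul_conj, Complex.normSq_eq_norm_sq, ha]
      push_cast
      ring
    -- pointwise lower bound for the infimum
    have hlow : ∀ v ∈ ((fun z => ‖x - z‖ + ‖z - y‖)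
        '' {z : ℂ | ‖z‖ = 1}),
        ‖x - y‖ * (1 + K * t ^ 2) / ((1 + K) * t) ≤ v := by
      rintro v ⟨z, hz, rfl⟩
      simp only [Set.mem_setOf_eq] at hz
      dsimp only
      have hz1 : z * (starRingEnd ℂ) z = 1 := by
        rw [Complex.mul_conj, Complex.normSq_eq_norm_sq, hz]
        norm_num
      obtain ⟨Nz, hNzdef⟩ : ∃ u : ℂ,
        u = (1 - (starRingEnd ℂ) q * z) - (starRingEnd ℂ) a * (z - q) := ⟨_, rfl⟩
      obtain ⟨Mz, hMzdef⟩ : ∃ u : ℂ,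
        u = (1 - (starRingEnd ℂ) q * z) + (starRingEnd ℂ) a * (z - q) := ⟨_, rfl⟩
      have hxec : (starRingEnd ℂ) x * (1 + q * (starRingEnd ℂ) a)
          = (starRingEnd ℂ) a + (starRingEnd ℂ) q := by
        have h1 := congrArg (starRingEnd ℂ) hxe
        simpa using h1
      have hyec : (starRingEnd ℂ) y * (1 - q * (starRingEnd ℂ) a)
          = (starRingEnd ℂ) q - (starRingEnd ℂ) a := by
        have h1 := congrArg (starRingEnd ℂ) hye
        simpa using h1
      have hNx : (1 - (starRingEnd ℂ) x * z) * (1 + q * (starRingEnd ℂ) a) = Nz := by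
        rw [hNzdef]
        linear_combination (-z) * hxec
      have hMy : (1 - (starRingEnd ℂ) y * z) * (1 - q * (starRingEnd ℂ) a) = Mz := by
        rw [hMzdef]
        linear_combination (-z) * hyec
      -- |x - z| = |1 - conj x * z| and similarly for y
      have habs1 : ∀ u : ℂ, ‖u - z‖ = ‖1 - (starRingEnd ℂ) u * z‖ := by
        intro u
        have e1 : (1 - (starRingEnd ℂ) u * z) * (starRingEnd ℂ) z
            = (starRingEnd ℂ) z - (starRingEnd ℂ) u := by
          linear_combination (-(starRingEnd ℂ) u) * hz1
        have h2 := congrArg norm e1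
        rw [norm_mul, Complex.norm_conj, hz, mul_one,
          show (starRingEnd ℂ) z - (starRingEnd ℂ) u = (starRingEnd ℂ) (z - u) by
            rw [map_sub], Complex.norm_conj] at h2
        rw [norm_sub_rev, h2]
      have hcc1 : ‖1 + q * (starRingEnd ℂ) a‖ = C1 := by
        rw [hC1def, ← Complex.norm_conj (1 + q * (starRingEnd ℂ) a)]
        congr 1
        simp only [map_add, map_mul, map_one, Complex.conj_conj]
      have hcc2 : ‖1 - q * (starRingEnd ℂ) a‖ = C2 := by
        rw [hC2def, ← Complex.norm_conj (1 - q * (starRingEnd ℂ) a)]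
        congr 1
        simp only [map_sub, map_mul, map_one, Complex.conj_conj]
      have habs_xz : ‖x - z‖ * C1 = ‖Nz‖ := by
        have h := congrArg norm hNx
        rw [norm_mul, hcc1] at h
        rw [habs1 x, h]
      have habs_zy : ‖z - y‖ * C2 = ‖Mz‖ := by
        have h := congrArg norm hMy
        rw [norm_mul, hcc2] at h
        rw [norm_sub_rev, habs1 y, h]
      obtain ⟨W, hWdef⟩ : ∃ u : ℂ,
        u = (1 - (starRingEnd ℂ) q * z) + ((t : ℂ)) ^ 2 * (starRingEnd ℂ) q * (z - q) := ⟨_, rfl⟩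
      have hsum : (1 - (starRingEnd ℂ) q * a) * Nz + (1 + (starRingEnd ℂ) q * a) * Mz
          = 2 * W := by
        rw [hNzdef, hMzdef, hWdef]
        linear_combination 2 * (starRingEnd ℂ) q * (z - q) * ha'
      have htri : 2 * ‖W‖ ≤ C2 * ‖Nz‖ + C1 * ‖Mz‖ := by
        calc 2 * ‖W‖ = ‖2 * W‖ := by
              rw [norm_mul, Complex.norm_two]
          _ = ‖(1 - (starRingEnd ℂ) q * a) * Nz
              + (1 + (starRingEnd ℂ) q * a) * Mz‖ := by rw [hsum]
          _ ≤ ‖(1 - (starRingEnd ℂ) q * a) * Nz‖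
              + ‖(1 + (starRingEnd ℂ) q * a) * Mz‖ := norm_add_le _ _
          _ = C2 * ‖Nz‖ + C1 * ‖Mz‖ := by
              rw [norm_mul, norm_mul, hC1def, hC2def]
      -- the key estimate on |W|
      have hW : (1 + K * t ^ 2) * (1 - K ^ 2) ≤ (1 + K) * ‖W‖ := by
        obtain ⟨s, hsdef⟩ : ∃ u : ℝ, u = ((starRingEnd ℂ) q * z).re := ⟨_, rfl⟩
        obtain ⟨si, hsidef⟩ : ∃ u : ℝ, u = ((starRingEnd ℂ) q * z).im := ⟨_, rfl⟩
        have hsK : s ^ 2 + si ^ 2 = K ^ 2 := by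
          have h1 : Complex.normSq ((starRingEnd ℂ) q * z) = K ^ 2 := by
            rw [map_mul Complex.normSq, Complex.normSq_conj, Complex.normSq_eq_norm_sq,
              Complex.normSq_eq_norm_sq, hz, hKdef]
            ring
          rw [Complex.normSq_apply] at h1
          rw [hsdef, hsidef]
          linarith [h1]
        have hsle : s ≤ K := by
          have h1 := Complex.re_le_norm ((starRingEnd ℂ) q * z)
          rw [norm_mul, Complex.norm_conj, hz, mul_one, ← hKdef, ← hsdef] at h1
          exact h1
        have hqqc : (starRingEnd ℂ) q * q = ((K : ℂ)) ^ 2 := by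
          rw [hqq]; push_cast; ring
        have hWc : W = (((1 - t ^ 2 * K ^ 2 : ℝ)) : ℂ)
            - (((1 - t ^ 2 : ℝ)) : ℂ) * ((starRingEnd ℂ) q * z) := by
          rw [hWdef]
          push_cast
          linear_combination (-(t:ℂ) ^ 2) * hqqc
        have hWre : W.re = (1 - t ^ 2 * K ^ 2) - (1 - t ^ 2) * s := by
          rw [hWc]
          simp only [Complex.sub_re, Complex.mul_re, Complex.ofReal_re, Complex.ofReal_im,
            hsdef, hsidef]
          ring
        have hWim : W.im = -((1 - t ^ 2) * si) := by
          rw [hWc]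
          simp only [Complex.sub_im, Complex.mul_im, Complex.ofReal_re, Complex.ofReal_im,
            hsdef, hsidef]
          ring
        have habs2 : ‖W‖ ^ 2 = W.re ^ 2 + W.im ^ 2 := by
          rw [Complex.sq_norm, Complex.normSq_apply]; ring
        have key : ((1 + K * t ^ 2) * (1 - K ^ 2)) ^ 2 ≤ ((1 + K) * ‖W‖) ^ 2 := by
          rw [mul_pow (1 + K) (‖W‖), habs2, hWre, hWim]
          have e : (1 + K) ^ 2 * (((1 - t ^ 2 * K ^ 2) - (1 - t ^ 2) * s) ^ 2
                + (-((1 - t ^ 2) * si)) ^ 2)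
              - ((1 + K * t ^ 2) * (1 - K ^ 2)) ^ 2
              = 2 * (1 + K) ^ 2 * (1 - t ^ 2) * (1 - K ^ 2 * t ^ 2) * (K - s) := by
            linear_combination ((1 + K) ^ 2 * (1 - t ^ 2) ^ 2) * hsK
          have e1 : (0:ℝ) ≤ 1 - t ^ 2 := by linarith
          have e2 : (0:ℝ) ≤ 1 - K ^ 2 * t ^ 2 := by
            have h7 : K ^ 2 * t ^ 2 ≤ 1 * t ^ 2 :=
              mul_le_mul_of_nonneg_right (by linarith) (sq_nonneg t)
            linarith
          have e3 : (0:ℝ) ≤ K - s := by linarith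
          have h9 : (0:ℝ) ≤ 2 * (1 + K) ^ 2 * (1 - t ^ 2) * (1 - K ^ 2 * t ^ 2) * (K - s) := by
            have h8 : (0:ℝ) ≤ 2 * (1 + K) ^ 2 := by positivity
            exact mul_nonneg (mul_nonneg (mul_nonneg h8 e1) e2) e3
          linarith [e, h9]
        have h10 : (0:ℝ) ≤ (1 + K * t ^ 2) * (1 - K ^ 2) :=
          mul_nonneg (le_of_lt hKt2pos) (le_of_lt hK2)
        have h11 : (0:ℝ) ≤ (1 + K) * ‖W‖ := by positivity
        have h12 := Real.sqrt_le_sqrt key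
        rwa [Real.sqrt_sq h10, Real.sqrt_sq h11] at h12
      -- combine everything
      have hden : (0:ℝ) < (1 + K) * t := mul_pos (by linarith) htpos
      rw [div_le_iff₀ hden]
      have hfin : ‖x - y‖ * (1 + K * t ^ 2) * (C1 * C2)
          ≤ (‖x - z‖ + ‖z - y‖) * ((1 + K) * t) * (C1 * C2) := by
        have h1 : 2 * t * ((1 + K * t ^ 2) * (1 - K ^ 2)) ≤ 2 * t * ((1 + K) * ‖W‖) :=
          mul_le_mul_of_nonneg_left hW (by linarith)
        have h2 : t * (1 + K) * (2 * ‖W‖)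
            ≤ t * (1 + K) * (C2 * ‖Nz‖ + C1 * ‖Mz‖) :=
          mul_le_mul_of_nonneg_left htri (mul_nonneg ht0 (by linarith))
        calc ‖x - y‖ * (1 + K * t ^ 2) * (C1 * C2)
            = (‖x - y‖ * (C1 * C2)) * (1 + K * t ^ 2) := by ring
          _ = 2 * t * (1 - K ^ 2) * (1 + K * t ^ 2) := by rw [hxyC]
          _ = 2 * t * ((1 + K * t ^ 2) * (1 - K ^ 2)) := by ring
          _ ≤ 2 * t * ((1 + K) * ‖W‖) := h1
          _ = t * (1 + K) * (2 * ‖W‖) := by ring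
          _ ≤ t * (1 + K) * (C2 * ‖Nz‖ + C1 * ‖Mz‖) := h2
          _ = t * (1 + K) * (C2 * (‖x - z‖ * C1)
              + C1 * (‖z - y‖ * C2)) := by rw [habs_xz, habs_zy]
          _ = (‖x - z‖ + ‖z - y‖) * ((1 + K) * t) * (C1 * C2) := by
              ring
      exact le_of_mul_le_mul_right hfin (mul_pos hC1pos hC2pos)
    -- finish
    have hne : ((fun z => ‖x - z‖ + ‖z - y‖)
        '' {z : ℂ | ‖z‖ = 1}).Nonempty := by
      refine ⟨‖x - 1‖ + ‖1 - y‖, ⟨1, by simp, rfl⟩⟩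
    have hInf := le_csInf hne hlow
    have hBpos : (0:ℝ) < ‖x - y‖ * (1 + K * t ^ 2) / ((1 + K) * t) :=
      div_pos (mul_pos hxypos hKt2pos) (mul_pos (by linarith) htpos)
    rw [sB]
    calc ‖x - y‖ / sInf ((fun z => ‖x - z‖ + ‖z - y‖)
          '' {z : ℂ | ‖z‖ = 1})
        ≤ ‖x - y‖ / (‖x - y‖ * (1 + K * t ^ 2) / ((1 + K) * t)) := by
          apply div_le_div_of_nonneg_left (norm_nonneg _) hBpos hInf
      _ = (1 + K) * t / (1 + K * t ^ 2) := by
          have h1 : ‖x - y‖ ≠ 0 := ne_of_gt hxypos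
          have h2 : (1 + K * t ^ 2) ≠ 0 := ne_of_gt hKt2pos
          have h3 : ((1 + K) * t) ≠ 0 := ne_of_gt (mul_pos (by linarith) htpos)
          field_simp
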